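/- arXiv:2105.13438 — 2 statements merged into one kernel-verified Lean document; each statement's English description precedes it below -/
import Mathlib

section
/- For any graph G with no isolated vertex, ρ(G)·(δ(G) - 1) ≤ ∂_{2p}(G) ≤ ρ(G)·(Δ(G) - 1), where δ(G) and Δ(G) are the minimum and maximum degrees of G. -/
open Finset

variable {V : Type*}

/-- `S` is a 2-packing: closed neighbourhoods of distinct vertices of `S` are disjoint. -/
def IsPacking2 (G : SimpleGraph V) (S : Finset V) : Prop :=
  (S : Set V).Pairwise fun u v =>
    Disjoint (G.neighborSet u ∪ {u}) (G.neighborSet v ∪ {v})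

/-- The external neighbourhood of `S`: vertices outside `S` with a neighbour in `S`. -/
def extN (G : SimpleGraph V) [Fintype V] [DecidableEq V] [DecidableRel G.Adj]
    (S : Finset V) : Finset V :=
  Finset.univ.filter fun v => v ∉ S ∧ ∃ u ∈ S, G.Adj u v

/-- The differential of a set `S`: `|N_e(S)| - |S|`. -/
def diffSet (G : SimpleGraph V) [Fintype V] [DecidableEq V] [DecidableRel G.Adj]
    (S : Finset V) : ℤ :=
  ((extN G S).card : ℤ) - S.card

/-- The 2-packing differential of `G`. -/
noncomputable def pdiff2 (G : SimpleGraph V) [Fintype V] [DecidableEq V]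
    [DecidableRel G.Adj] : ℤ :=
  sSup {d : ℤ | ∃ S : Finset V, IsPacking2 G S ∧ d = diffSet G S}

/-- The packing number of `G`: maximum cardinality of a 2-packing. -/
noncomputable def packNum (G : SimpleGraph V) [Fintype V] : ℕ :=
  sSup {n : ℕ | ∃ S : Finset V, IsPacking2 G S ∧ n = S.card}

/-- `G` has no isolated vertex. -/
def NoIsolated (G : SimpleGraph V) : Prop := ∀ v : V, ∃ u, G.Adj v u

/-- `S` is a dominating set of `G`. -/
def IsDom (G : SimpleGraph V) (S : Finset V) : Prop :=
  ∀ v, v ∉ S → ∃ u ∈ S, G.Adj u v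

lemma extN_eq (G : SimpleGraph V) [Fintype V] [DecidableEq V] [DecidableRel G.Adj]
    {S : Finset V} (hS : IsPacking2 G S) :
    extN G S = S.biUnion (fun u => G.neighborFinset u) := by
  ext v
  simp only [extN, mem_filter, mem_univ, true_and, mem_biUnion,
    SimpleGraph.mem_neighborFinset]
  constructor
  · rintro ⟨hv, u, hu, huv⟩; exact ⟨u, hu, huv⟩
  · rintro ⟨u, hu, huv⟩
    refine ⟨fun hvS => ?_, u, hu, huv⟩
    have hne : u ≠ v := G.ne_of_adj huv
    have hd := hS hu hvS hne
    exact Set.disjoint_left.mp hd (Set.mem_union_left _ huv) (Set.mem_union_right _ rfl)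

lemma diffSet_eq (G : SimpleGraph V) [Fintype V] [DecidableEq V] [DecidableRel G.Adj]
    {S : Finset V} (hS : IsPacking2 G S) :
    diffSet G S = ∑ u ∈ S, ((G.degree u : ℤ) - 1) := by
  have hdisj : (S : Set V).PairwiseDisjoint (fun u => G.neighborFinset u) := by
    intro u hu v hv hne
    have hd := hS hu hv hne
    refine Finset.disjoint_left.mpr fun w hwu hwv => ?_
    rw [SimpleGraph.mem_neighborFinset] at hwu hwv
    exact Set.disjoint_left.mp hd (Set.mem_union_left _ hwu) (Set.mem_union_left _ hwv)
  have hcard : (extN G S).card = ∑ u ∈ S, G.degree u := by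
    rw [extN_eq G hS, Finset.card_biUnion hdisj]
    rfl
  rw [diffSet, hcard, Finset.sum_sub_distrib, Finset.sum_const, Nat.cast_sum]
  ring

lemma packing_empty (G : SimpleGraph V) : IsPacking2 G (∅ : Finset V) := by
  simp [IsPacking2]

lemma diffSet_empty (G : SimpleGraph V) [Fintype V] [DecidableEq V] [DecidableRel G.Adj] :
    diffSet G (∅ : Finset V) = 0 := by
  simp [diffSet, extN]

theorem stmt2 {V : Type*} [Fintype V] [DecidableEq V] (G : SimpleGraph V)
    [DecidableRel G.Adj] (h : NoIsolated G) :
    (packNum G : ℤ) * ((G.minDegree : ℤ) - 1) ≤ pdiff2 G ∧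
      pdiff2 G ≤ (packNum G : ℤ) * ((G.maxDegree : ℤ) - 1) := by
  set PN : Set ℕ := {n : ℕ | ∃ S : Finset V, IsPacking2 G S ∧ n = S.card} with hPN
  set PD : Set ℤ := {d : ℤ | ∃ S : Finset V, IsPacking2 G S ∧ d = diffSet G S} with hPD
  have hPNne : PN.Nonempty := ⟨0, ∅, packing_empty G, by simp⟩
  have hPNbdd : BddAbove PN := by
    refine ⟨Fintype.card V, fun n hn => ?_⟩
    obtain ⟨S, _, rfl⟩ := hn
    exact S.card_le_univ.trans_eq (by simp)
  have hPDne : PD.Nonempty := ⟨0, ∅, packing_empty G, (diffSet_empty G).symm⟩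
  have hPDbdd : BddAbove PD := by
    refine ⟨Fintype.card V, fun d hd => ?_⟩
    obtain ⟨S, _, rfl⟩ := hd
    have : ((extN G S).card : ℤ) ≤ Fintype.card V := by
      exact_mod_cast (extN G S).card_le_univ.trans_eq (by simp)
    have h0 : (0 : ℤ) ≤ S.card := Int.natCast_nonneg _
    simp only [diffSet]; omega
  obtain ⟨S₀, hS₀, hcard₀⟩ : ∃ S : Finset V, IsPacking2 G S ∧ packNum G = S.card :=
    Nat.sSup_mem hPNne hPNbdd
  have hΔpos : 1 ≤ packNum G → 1 ≤ G.maxDegree := by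
    intro hp
    rw [hcard₀] at hp
    obtain ⟨u, hu⟩ := Finset.card_pos.mp hp
    obtain ⟨w, hw⟩ := h u
    have : 1 ≤ G.degree u := by
      rw [← SimpleGraph.card_neighborFinset_eq_degree]
      exact Finset.card_pos.mpr ⟨w, (SimpleGraph.mem_neighborFinset G u w).mpr hw⟩
    exact this.trans (G.degree_le_maxDegree u)
  constructor
  · -- lower bound
    have hle : (packNum G : ℤ) * ((G.minDegree : ℤ) - 1) ≤ diffSet G S₀ := by
      rw [diffSet_eq G hS₀, hcard₀]
      calc (S₀.card : ℤ) * ((G.minDegree : ℤ) - 1)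
          = ∑ _u ∈ S₀, ((G.minDegree : ℤ) - 1) := by
            rw [Finset.sum_const, nsmul_eq_mul]
        _ ≤ ∑ u ∈ S₀, ((G.degree u : ℤ) - 1) := by
            refine Finset.sum_le_sum fun u _ => ?_
            have := G.minDegree_le_degree u
            omega
    exact hle.trans (le_csSup hPDbdd ⟨S₀, hS₀, rfl⟩)
  · -- upper bound
    refine csSup_le hPDne ?_
    rintro d ⟨S, hS, rfl⟩
    rw [diffSet_eq G hS]
    have hScard : S.card ≤ packNum G := le_csSup hPNbdd ⟨S, hS, rfl⟩
    calc ∑ u ∈ S, ((G.degree u : ℤ) - 1)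
        ≤ ∑ _u ∈ S, ((G.maxDegree : ℤ) - 1) := by
          refine Finset.sum_le_sum fun u _ => ?_
          have := G.degree_le_maxDegree u
          omega
      _ = (S.card : ℤ) * ((G.maxDegree : ℤ) - 1) := by
          rw [Finset.sum_const, nsmul_eq_mul]
      _ ≤ (packNum G : ℤ) * ((G.maxDegree : ℤ) - 1) := by
          rcases Nat.eq_zero_or_pos (packNum G) with hp | hp
          · have h0 : S.card = 0 := by omega
            simp [h0, hp]
          · have h1 : (1 : ℤ) ≤ (G.maxDegree : ℤ) := by exact_mod_cast hΔpos hp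
            have : (S.card : ℤ) ≤ packNum G := by exact_mod_cast hScard
            nlinarith
end

section
/- If G has no isolated vertex and ∂_{2p}(G) = ρ(G)·(δ(G) - 1), then every vertex belonging to any maximum 2-packing of G has degree δ(G). -/
open Finset

variable {V : Type*}

lemma extN_eq_biUnion {V : Type*} [Fintype V] [DecidableEq V] (G : SimpleGraph V)
    [DecidableRel G.Adj] {S : Finset V} (hS : IsPacking2 G S) :
    extN G S = S.biUnion (fun v => G.neighborFinset v) := by
  ext w
  simp only [extN, mem_filter, mem_univ, true_and, mem_biUnion, G.mem_neighborFinset]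
  constructor
  · rintro ⟨-, u, hu, hadj⟩; exact ⟨u, hu, hadj⟩
  · rintro ⟨u, hu, hadj⟩
    refine ⟨fun hw => ?_, u, hu, hadj⟩
    have hne : u ≠ w := G.ne_of_adj hadj
    have := hS (by exact_mod_cast hu) (by exact_mod_cast hw) hne
    exact this.ne_of_mem (Set.mem_union_left _ hadj) (Set.mem_union_right _ rfl) rfl

lemma card_extN {V : Type*} [Fintype V] [DecidableEq V] (G : SimpleGraph V)
    [DecidableRel G.Adj] {S : Finset V} (hS : IsPacking2 G S) :
    (extN G S).card = ∑ v ∈ S, G.degree v := by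
  rw [extN_eq_biUnion G hS, Finset.card_biUnion]
  · rfl
  · intro u hu v hv hne
    have := hS (by exact_mod_cast hu) (by exact_mod_cast hv) hne
    have h1 : (G.neighborSet u : Set V) ≤ G.neighborSet u ∪ {u} := Set.subset_union_left
    have h2 : (G.neighborSet v : Set V) ≤ G.neighborSet v ∪ {v} := Set.subset_union_left
    have hdisj : Disjoint (G.neighborSet u) (G.neighborSet v) := this.mono h1 h2
    rw [Function.onFun, Finset.disjoint_left]
    intro a ha hb
    exact hdisj.ne_of_mem (by simpa using ha) (by simpa using hb) rfl

theorem stmt4 {V : Type*} [Fintype V] [DecidableEq V] (G : SimpleGraph V)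
    [DecidableRel G.Adj] (h : NoIsolated G)
    (heq : pdiff2 G = (packNum G : ℤ) * ((G.minDegree : ℤ) - 1)) :
    ∀ S : Finset V, IsPacking2 G S → S.card = packNum G →
      ∀ v ∈ S, G.degree v = G.minDegree := by
  intro S hS hcard v hv
  by_contra hne
  have hmin : G.minDegree ≤ G.degree v := G.minDegree_le_degree v
  have hlt : G.minDegree < G.degree v := lt_of_le_of_ne hmin (Ne.symm hne)
  -- diffSet S ≤ pdiff2
  have hbdd : BddAbove {d : ℤ | ∃ S : Finset V, IsPacking2 G S ∧ d = diffSet G S} := by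
    refine ⟨(Fintype.card V : ℤ), ?_⟩
    rintro d ⟨T, -, rfl⟩
    have h1 : (extN G T).card ≤ Fintype.card V := Finset.card_le_univ _
    simp only [diffSet]
    have : ((extN G T).card : ℤ) ≤ (Fintype.card V : ℤ) := by exact_mod_cast h1
    omega
  have hmem : diffSet G S ∈ {d : ℤ | ∃ S : Finset V, IsPacking2 G S ∧ d = diffSet G S} :=
    ⟨S, hS, rfl⟩
  have hle : diffSet G S ≤ pdiff2 G := le_csSup hbdd hmem
  have hsum : diffSet G S = ∑ u ∈ S, ((G.degree u : ℤ) - 1) := by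
    simp [diffSet, card_extN G hS, Finset.sum_sub_distrib]
  have hstrict : ∑ u ∈ S, ((G.minDegree : ℤ) - 1) < ∑ u ∈ S, ((G.degree u : ℤ) - 1) := by
    refine Finset.sum_lt_sum (fun u hu => ?_) ⟨v, hv, ?_⟩
    · have := G.minDegree_le_degree u
      have : (G.minDegree : ℤ) ≤ G.degree u := by exact_mod_cast this
      omega
    · have : (G.minDegree : ℤ) < G.degree v := by exact_mod_cast hlt
      omega
  have hconst : ∑ u ∈ S, ((G.minDegree : ℤ) - 1) = (packNum G : ℤ) * ((G.minDegree : ℤ) - 1) := by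
    rw [Finset.sum_const, ← hcard]; push_cast; ring
  rw [hconst, ← heq, ← hsum] at hstrict
  exact absurd hle (not_le.mpr hstrict)
end
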